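/- With the assumptions of the preceding construction, the shift operator A_0 defined on equivalence classes by A_0 [ (h_0, h_1, …, h_r, 0, …) ] = [ (0, h_0, h_1, …, h_r, 0, …) ] is well-defined on the quotient of B by the null space of Φ. -/

import Mathlib

open scoped ComplexOrder

/-- The Hankel sesquilinear form `Φ((h_j),(g_k)) = ∑_{j,k} ⟨S_{j+k} h_j, g_k⟩` on finitely
supported `H`-valued sequences. -/
noncomputable def hankelForm {H : Type*} [NormedAddCommGroup H] [InnerProductSpace ℂ H]
    (S : ℕ → H →L[ℂ] H) (u v : ℕ →₀ H) : ℂ :=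
  ∑ j ∈ u.support, ∑ k ∈ v.support, (inner ℂ (u j) (S (j + k) (v k)) : ℂ)

/-- The right shift `(h_0, h_1, …) ↦ (0, h_0, h_1, …)` on finitely supported sequences. -/
noncomputable def rightShift {H : Type*} [AddCommGroup H] (u : ℕ →₀ H) : ℕ →₀ H :=
  Finsupp.mapDomain (· + 1) u

open Finset in
/-- The Hankel form can be computed over any rectangle `range m × range m` covering the
supports. -/
private lemma hankel_eq_range {H : Type*} [NormedAddCommGroup H] [InnerProductSpace ℂ H]
    (S : ℕ → H →L[ℂ] H) (u v : ℕ →₀ H) (m : ℕ)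
    (hu : ∀ j, m ≤ j → u j = 0) (hv : ∀ j, m ≤ j → v j = 0) :
    hankelForm S u v = ∑ j ∈ range m, ∑ k ∈ range m, (inner ℂ (u j) (S (j + k) (v k)) : ℂ) := by
  unfold hankelForm
  have hsu : u.support ⊆ range m := fun j hj => mem_range.2 (by
    by_contra h; exact Finsupp.mem_support_iff.mp hj (hu j (by omega)))
  have hsv : v.support ⊆ range m := fun k hk => mem_range.2 (by
    by_contra h; exact Finsupp.mem_support_iff.mp hk (hv k (by omega)))
  rw [Finset.sum_subset hsu (fun j _ hj => Finset.sum_eq_zero fun k _ => by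
    rw [Finsupp.notMem_support_iff.mp hj]; simp)]
  refine Finset.sum_congr rfl fun j _ => ?_
  exact Finset.sum_subset hsv (fun k _ hk => by
    rw [Finsupp.notMem_support_iff.mp hk]; simp)

open Finset in
/-- Shrinking a double sum over `range m` to `range n` when terms vanish outside. -/
private lemma double_sum_shrink (f : ℕ → ℕ → ℂ) {n m : ℕ} (h : n ≤ m)
    (h0 : ∀ j k, n ≤ j ∨ n ≤ k → f j k = 0) :
    ∑ j ∈ range m, ∑ k ∈ range m, f j k = ∑ j ∈ range n, ∑ k ∈ range n, f j k := by
  rw [← Finset.sum_subset (Finset.range_subset_range.2 h)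
      (fun j hj hjn => Finset.sum_eq_zero fun k _ => h0 j k (Or.inl (by simpa using hjn)))]
  refine Finset.sum_congr rfl fun j hj => ?_
  exact (Finset.sum_subset (Finset.range_subset_range.2 h)
      (fun k hk hkn => h0 j k (Or.inr (by simpa using hkn)))).symm

open Finset in
private lemma expand_quadratic {H : Type*} [NormedAddCommGroup H] [InnerProductSpace ℂ H]
    (S : ℕ → H →L[ℂ] H) (N : ℕ) (a b : ℕ → H) (t : ℂ) :
    (∑ j ∈ range N, ∑ k ∈ range N,
      (inner ℂ (a j + t • b j) (S (j + k) (a k + t • b k)) : ℂ))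
    = (∑ j ∈ range N, ∑ k ∈ range N, (inner ℂ (a j) (S (j + k) (a k)) : ℂ))
      + t * (∑ j ∈ range N, ∑ k ∈ range N, (inner ℂ (a j) (S (j + k) (b k)) : ℂ))
      + (starRingEnd ℂ) t * (∑ j ∈ range N, ∑ k ∈ range N, (inner ℂ (b j) (S (j + k) (a k)) : ℂ))
      + (starRingEnd ℂ) t * t *
          (∑ j ∈ range N, ∑ k ∈ range N, (inner ℂ (b j) (S (j + k) (b k)) : ℂ)) := by
  simp only [Finset.mul_sum, ← Finset.sum_add_distrib]
  refine Finset.sum_congr rfl fun j _ => Finset.sum_congr rfl fun k _ => ?_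
  simp only [map_add, map_smul, inner_add_left, inner_add_right, inner_smul_left,
    inner_smul_right]
  ring

/-- If `r ↦ r A + r² C` is nonnegative for all real `r` and `0 ≤ C`, then `A = 0`. -/
private lemma key_scalar (A C : ℂ) (hC : 0 ≤ C)
    (h : ∀ r : ℝ, 0 ≤ (r : ℂ) * A + (r : ℂ) ^ 2 * C) : A = 0 := by
  rw [Complex.le_def] at hC
  simp only [Complex.zero_re, Complex.zero_im] at hC
  obtain ⟨hc0, hci⟩ := hC
  have him : A.im = 0 := by
    have h1 := (Complex.le_def.mp (h 1)).2
    simpa [← hci] using h1.symm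
  have hre : A.re = 0 := by
    by_contra hA
    have hr := (Complex.le_def.mp (h (-A.re / (C.re + 1)))).1
    have hpos : (0:ℝ) < C.re + 1 := by linarith
    simp only [Complex.add_re, Complex.mul_re, Complex.ofReal_re, Complex.ofReal_im,
      Complex.zero_re] at hr
    have expand : ((-A.re / (C.re + 1) : ℝ) : ℂ) ^ 2 = (((-A.re / (C.re + 1)) ^ 2 : ℝ) : ℂ) := by
      push_cast; ring
    rw [expand] at hr
    simp only [Complex.mul_re, Complex.ofReal_re, Complex.ofReal_im, ← hci] at hr
    have h2 : (0:ℝ) ≤ -A.re / (C.re + 1) * A.re + (-A.re / (C.re + 1)) ^ 2 * C.re := by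
      simpa using hr
    have h3 : -A.re / (C.re + 1) * A.re + (-A.re / (C.re + 1)) ^ 2 * C.re
        = -(A.re ^ 2) / (C.re + 1) ^ 2 := by
      field_simp; ring
    rw [h3] at h2
    have ha2 : 0 < A.re ^ 2 := by positivity
    have hd : 0 < (C.re + 1) ^ 2 := by positivity
    rcases div_nonneg_iff.mp h2 with ⟨h4, _⟩ | ⟨_, h4⟩ <;> linarith
  exact Complex.ext hre him

/-- the shift operator `A₀` is well defined on the quotient of the space of
finitely supported sequences by the null space of the Hankel form: if `Φ(u - v, u - v) = 0`
then `Φ(Su - Sv, Su - Sv) = 0`, where `S` is the right shift. -/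
theorem stmt4 {H : Type*} [NormedAddCommGroup H] [InnerProductSpace ℂ H] [CompleteSpace H]
    (S : ℕ → H →L[ℂ] H)
    (hpos : ∀ (r : ℕ) (h : ℕ → H),
      0 ≤ ∑ k ∈ Finset.range (r + 1), ∑ l ∈ Finset.range (r + 1),
        (inner ℂ (h k) (S (k + l) (h l)) : ℂ))
    (u v : ℕ →₀ H)
    (hnull : hankelForm S (u - v) (u - v) = 0) :
    hankelForm S (rightShift u - rightShift v) (rightShift u - rightShift v) = 0 := by
  classical
  set w : ℕ →₀ H := u - v with hw
  -- basic facts about the shift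
  have rs_succ : ∀ (x : ℕ →₀ H) (j : ℕ), rightShift x (j + 1) = x j := fun x j =>
    Finsupp.mapDomain_apply (fun a b h => by omega) x j
  have rs_zero : ∀ (x : ℕ →₀ H), rightShift x 0 = 0 := fun x =>
    Finsupp.mapDomain_notin_range _ _ (by rintro ⟨a, ha⟩; simp at ha)
  have hshift : rightShift u - rightShift v = rightShift w := by
    rw [hw]
    exact (map_sub (Finsupp.mapDomain.addMonoidHom (· + 1)) u v).symm
  rw [hshift]
  -- choose a bound for the support of w
  obtain ⟨n, hn⟩ : ∃ n, ∀ j, n ≤ j → w j = 0 := by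
    refine ⟨w.support.sup id + 1, fun j hj => ?_⟩
    by_contra h
    have := Finset.le_sup (f := id) (Finsupp.mem_support_iff.mpr h)
    simp only [id] at this; omega
  have hrsn : ∀ j, n + 1 ≤ j → rightShift w j = 0 := by
    intro j hj
    obtain ⟨j', rfl⟩ : ∃ j', j = j' + 1 := ⟨j - 1, by omega⟩
    rw [rs_succ]; exact hn j' (by omega)
  set N : ℕ := n + 2 with hN
  open Finset in
  -- the sequence g = S² w
  set g : ℕ → H := fun k => if 2 ≤ k then w (k - 2) else 0 with hg
  have hgn : ∀ j, N ≤ j → g j = 0 := by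
    intro j hj
    simp only [hg]
    rw [if_pos (by omega)]
    exact hn _ (by omega)
  -- abbreviation for the form on functions over range N
  set F : (ℕ → H) → (ℕ → H) → ℂ := fun a b =>
    ∑ j ∈ Finset.range N, ∑ k ∈ Finset.range N, (inner ℂ (a j) (S (j + k) (b k)) : ℂ) with hF
  -- the common value  T
  set T : ℂ := ∑ j ∈ Finset.range n, ∑ k ∈ Finset.range n,
      (inner ℂ (w j) (S (j + k + 2) (w k)) : ℂ) with hT
  -- Step 1: the goal quantity equals T
  have step1 : hankelForm S (rightShift w) (rightShift w) = T := by
    rw [hankel_eq_range S _ _ (n + 2) (fun j hj => hrsn j (by omega))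
      (fun j hj => hrsn j (by omega))]
    rw [Finset.sum_range_succ']
    simp only [rs_zero, inner_zero_left, Finset.sum_const_zero, add_zero]
    have : ∀ j, ∑ k ∈ Finset.range (n + 2), (inner ℂ (rightShift w (j + 1))
        (S (j + 1 + k) (rightShift w k)) : ℂ)
        = ∑ k ∈ Finset.range (n + 1), (inner ℂ (w j) (S (j + k + 2) (w k)) : ℂ) := by
      intro j
      rw [Finset.sum_range_succ']
      simp only [rs_zero, map_zero, inner_zero_right, add_zero, rs_succ]
      refine Finset.sum_congr rfl fun k _ => ?_
      have hnat : j + 1 + (k + 1) = j + k + 2 := by omega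
      rw [hnat]
    rw [Finset.sum_congr rfl fun j _ => this j]
    exact double_sum_shrink _ (by omega) fun j k hjk => by
      rcases hjk with h | h
      · rw [hn j h]; simp
      · rw [hn k h]; simp
  -- Step 2: F w g = T
  have step2 : F (fun j => w j) g = T := by
    rw [hF]
    simp only
    have : ∀ j, ∑ k ∈ Finset.range N, (inner ℂ (w j) (S (j + k) (g k)) : ℂ)
        = ∑ k ∈ Finset.range n, (inner ℂ (w j) (S (j + k + 2) (w k)) : ℂ) := by
      intro j
      rw [hN, Finset.sum_range_succ', Finset.sum_range_succ']
      have hg0 : g 0 = 0 := by simp [hg]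
      have hg1 : g 1 = 0 := by simp [hg]
      have hg2 : ∀ k, g (k + 1 + 1) = w k := by intro k; simp [hg]
      simp only [hg0, hg1, hg2, map_zero, inner_zero_right, add_zero]
      refine Finset.sum_congr rfl fun k _ => ?_
      have hnat : j + (k + 1 + 1) = j + k + 2 := by omega
      rw [hnat]
    rw [Finset.sum_congr rfl fun j _ => this j]
    rw [hT]
    refine (Finset.sum_subset (Finset.range_subset_range.2 (by omega : n ≤ N))
      (fun j _ hj => Finset.sum_eq_zero fun k _ => ?_)).symm
    rw [hn j (by simpa using hj)]
    simp
  -- Step 3: F w w = 0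
  have step3 : F (fun j => w j) (fun j => w j) = 0 := by
    rw [hF]
    simp only
    rw [← hankel_eq_range S w w N (fun j hj => hn j (by omega)) (fun j hj => hn j (by omega))]
    exact hnull
  -- Step 4: positivity of F on the diagonal
  have step4 : ∀ a : ℕ → H, 0 ≤ F a a := by
    intro a
    have := hpos (n + 1) a
    rw [hF]
    simpa [hN] using this
  -- Step 5: the quadratic inequality
  have hCpos : 0 ≤ F g g := step4 g
  have quad : ∀ t : ℂ, 0 ≤ t * F (fun j => w j) g + (starRingEnd ℂ) t * F g (fun j => w j)
      + (starRingEnd ℂ) t * t * F g g := by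
    intro t
    have h0 := step4 (fun j => w j + t • g j)
    have he : F (fun j => w j + t • g j) (fun j => w j + t • g j)
        = F (fun j => w j) (fun j => w j) + t * F (fun j => w j) g
          + (starRingEnd ℂ) t * F g (fun j => w j) + (starRingEnd ℂ) t * t * F g g := by
      simp only [hF]
      exact expand_quadratic S N (fun j => w j) g t
    rw [he, step3, zero_add] at h0
    exact h0
  -- Step 6: deduce B1 = 0
  set B1 : ℂ := F (fun j => w j) g with hB1
  set B2 : ℂ := F g (fun j => w j) with hB2
  set C : ℂ := F g g with hC
  have hsum : B1 + B2 = 0 := by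
    refine key_scalar (B1 + B2) C hCpos fun r => ?_
    have := quad (r : ℂ)
    have hcr : (starRingEnd ℂ) (r : ℂ) = (r : ℂ) := Complex.conj_ofReal r
    rw [hcr] at this
    convert this using 1
    ring
  have hdiff : Complex.I * (B1 - B2) = 0 := by
    refine key_scalar (Complex.I * (B1 - B2)) C hCpos fun r => ?_
    have := quad ((r : ℂ) * Complex.I)
    have hcr : (starRingEnd ℂ) ((r : ℂ) * Complex.I) = -((r : ℂ) * Complex.I) := by
      simp [Complex.conj_ofReal]
    rw [hcr] at this
    convert this using 1
    have hI : Complex.I * Complex.I = -1 := Complex.I_mul_I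
    ring_nf
    rw [Complex.I_sq]
    ring
  have hB1zero : B1 = 0 := by
    have h1 : B1 - B2 = 0 := by
      rcases mul_eq_zero.mp hdiff with h' | h'
      · exact absurd h' Complex.I_ne_zero
      · exact h'
    linear_combination (hsum + h1) / 2
  -- conclude
  rw [step1, ← step2]
  exact hB1zero
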